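/- For every ε ∈ (0, 1/2) and all n, R ∈ ℕ with εn ≤ R ≤ n/2, setting R₀ := ⌊R/2⌋, one has |B_n(R₀)| / |B_n(R)| ≤ (R/(2R − R₀))^{R − R₀} ≤ (2/3)^{R − R₀}. -/

import Mathlib

open Finset

-- core: (R - d) * (R+d+1)^d ≤ R * (R+d)^d
lemma core_ineq (R d : ℕ) :
    ((R : ℝ) - d) * ((R : ℝ) + d + 1) ^ d ≤ (R : ℝ) * ((R : ℝ) + d) ^ d := by
  set x : ℝ := (R : ℝ) + d + 1 with hx
  have hx0 : (0:ℝ) < x := by positivity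
  have hx1 : (1:ℝ) ≤ x := by simp [hx]; positivity
  have ha : (-2 : ℝ) ≤ -(1/x) := by
    have : 1/x ≤ 1 := by rw [div_le_one hx0]; exact hx1
    linarith
  have hb := one_add_mul_le_pow ha d
  have heq : (1 + -(1/x)) = ((R:ℝ) + d) / x := by
    field_simp [hx]
    linarith
  rw [heq] at hb
  -- hb : 1 + d * (-(1/x)) ≤ ((R+d)/x)^d
  have hpow : (((R:ℝ) + d) / x) ^ d * x ^ d = ((R:ℝ) + d) ^ d := by
    rw [div_pow, div_mul_cancel₀]
    positivity
  have hxd : (0:ℝ) < x ^ d := by positivity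
  have hb2 : (1 - (d:ℝ)/x) * x ^ d ≤ ((R:ℝ) + d) ^ d := by
    calc (1 - (d:ℝ)/x) * x ^ d ≤ (((R:ℝ)+d)/x)^d * x^d := by
          apply mul_le_mul_of_nonneg_right _ (le_of_lt hxd)
          convert hb using 1; ring
      _ = ((R:ℝ)+d)^d := hpow
  -- (R - d) ≤ R * (1 - d/x) since (R-d)*x ≤ R*(x - d) = R*(R+1)
  have hkey : ((R:ℝ) - d) * x ≤ (R:ℝ) * (1 - (d:ℝ)/x) * x := by
    have : (R:ℝ) * (1 - (d:ℝ)/x) * x = (R:ℝ) * (x - d) := by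
      field_simp
    rw [this]
    nlinarith [Nat.cast_nonneg (α := ℝ) d, Nat.cast_nonneg (α := ℝ) R]
  have hkey2 : ((R:ℝ) - d) ≤ (R:ℝ) * (1 - (d:ℝ)/x) :=
    le_of_mul_le_mul_right (by linarith [hkey]) hx0
  calc ((R:ℝ) - d) * x ^ d ≤ (R:ℝ) * (1 - (d:ℝ)/x) * x ^ d := by
        apply mul_le_mul_of_nonneg_right hkey2 (le_of_lt hxd)
    _ = (R:ℝ) * ((1 - (d:ℝ)/x) * x ^ d) := by ring
    _ ≤ (R:ℝ) * ((R:ℝ)+d)^d := by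
        apply mul_le_mul_of_nonneg_left hb2 (Nat.cast_nonneg R)

-- product bound
lemma prod_bound (R : ℕ) : ∀ d : ℕ, d ≤ R →
    (∏ t ∈ range d, (((R:ℝ) - t) / ((R:ℝ) + 1 + t))) ≤ ((R:ℝ) / ((R:ℝ) + d)) ^ d := by
  intro d
  induction d with
  | zero => simp
  | succ d ih =>
    intro hd
    have hdR : d ≤ R := le_of_lt (Nat.lt_of_succ_le hd)
    have h1 : (0:ℝ) < (R:ℝ) + 1 + d := by positivity
    have h2 : (0:ℝ) < (R:ℝ) + d := by
      have : (0:ℝ) < (R:ℝ) := by exact_mod_cast Nat.lt_of_lt_of_le (Nat.succ_pos d) hd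
      positivity
    have h3 : (0:ℝ) ≤ (R:ℝ) - d := by
      have : (d:ℝ) ≤ R := by exact_mod_cast hdR
      linarith
    rw [prod_range_succ]
    have step : ((R:ℝ) / ((R:ℝ) + d)) ^ d * (((R:ℝ) - d) / ((R:ℝ) + 1 + d)) ≤
        ((R:ℝ) / ((R:ℝ) + (d+1))) ^ (d+1) := by
      rw [div_pow, div_pow, div_mul_div_comm, div_le_div_iff₀ (by positivity) (by positivity)]
      push_cast
      have hc := core_ineq R d
      calc (R:ℝ)^d * ((R:ℝ) - d) * ((R:ℝ) + (d+1))^(d+1)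
          = ((R:ℝ)^d * ((R:ℝ) + d + 1)) * (((R:ℝ) - d) * ((R:ℝ) + d + 1)^d) := by ring
        _ ≤ ((R:ℝ)^d * ((R:ℝ) + d + 1)) * ((R:ℝ) * ((R:ℝ) + d)^d) := by
            apply mul_le_mul_of_nonneg_left hc (by positivity)
        _ = (R:ℝ)^(d+1) * (((R:ℝ)+d)^d * ((R:ℝ) + 1 + d)) := by ring
    calc (∏ t ∈ range d, (((R:ℝ) - t) / ((R:ℝ) + 1 + t))) * (((R:ℝ) - d) / ((R:ℝ) + 1 + d))
        ≤ ((R:ℝ) / ((R:ℝ) + d)) ^ d * (((R:ℝ) - d) / ((R:ℝ) + 1 + d)) := by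
          apply mul_le_mul_of_nonneg_right (ih hdR) (by positivity)
      _ ≤ ((R:ℝ) / ((R:ℝ) + (d+1))) ^ (d+1) := step
      _ = ((R:ℝ) / ((R:ℝ) + (d+1:ℕ))) ^ (d+1) := by push_cast; ring_nf

-- choose comparison
lemma choose_bound (n R : ℕ) (hn : 2 * R ≤ n) : ∀ d k : ℕ, k + d ≤ R →
    (n.choose k : ℝ) ≤ (∏ t ∈ range d, (((R:ℝ) - t) / ((R:ℝ) + 1 + t))) * n.choose (k + d) := by
  intro d
  induction d with
  | zero => intro k _; simp
  | succ d ih =>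
    intro k hk
    have hk1 : (k + 1) + d ≤ R := by omega
    have hkR : k + 1 ≤ R - d := by omega
    have hnk : k < n := by omega
    -- choose n k * (n - k) = choose n (k+1) * (k+1)
    have hid : (n.choose (k+1) : ℝ) * (k+1) = (n.choose k : ℝ) * ((n:ℝ) - k) := by
      have h0 := Nat.choose_succ_right_eq n k
      have h' := congrArg (Nat.cast : ℕ → ℝ) h0
      push_cast [Nat.cast_sub (le_of_lt hnk)] at h'
      exact h'
    have hnk0 : (0:ℝ) < (n:ℝ) - k := by
      have : (k:ℝ) < n := by exact_mod_cast hnk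
      linarith
    have hck : (n.choose k : ℝ) = ((k:ℝ)+1)/((n:ℝ)-k) * n.choose (k+1) := by
      field_simp
      linarith [hid]
    have hfac : ((k:ℝ)+1)/((n:ℝ)-k) ≤ ((R:ℝ) - d) / ((R:ℝ) + 1 + d) := by
      apply div_le_div₀ (by
        have : (d:ℝ) ≤ R := by exact_mod_cast (by omega : d ≤ R)
        linarith) _ (by positivity) _
      · have : ((k:ℝ)+1) ≤ (R:ℝ) - d := by
          have h1 : (k:ℝ) + 1 + d ≤ R := by exact_mod_cast (by push_cast; exact_mod_cast Nat.cast_le.mpr hk1 : ((k+1+d:ℕ):ℝ) ≤ (R:ℕ))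
          linarith
        exact this
      · have : (R:ℝ) + 1 + d ≤ (n:ℝ) - k := by
          have h1 : (R + 1 + d + k : ℕ) ≤ n := by omega
          have := (Nat.cast_le (α := ℝ)).mpr h1
          push_cast at this
          linarith
        exact this
    have hIH := ih (k+1) hk1
    have hc1 : (0:ℝ) ≤ (n.choose (k+1+d) : ℝ) := Nat.cast_nonneg _
    have hP : (0:ℝ) ≤ ∏ t ∈ range d, (((R:ℝ) - t) / ((R:ℝ) + 1 + t)) := by
      apply prod_nonneg
      intro t ht
      have htd : t < d := mem_range.mp ht
      have : (t:ℝ) ≤ R := by exact_mod_cast (by omega : t ≤ R)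
      have h2 : (0:ℝ) < (R:ℝ) + 1 + t := by positivity
      apply div_nonneg (by linarith) (le_of_lt h2)
    rw [prod_range_succ]
    have hch1 : (0:ℝ) ≤ (n.choose (k+1) : ℝ) := Nat.cast_nonneg _
    calc (n.choose k : ℝ) = ((k:ℝ)+1)/((n:ℝ)-k) * n.choose (k+1) := hck
      _ ≤ (((R:ℝ) - d) / ((R:ℝ) + 1 + d)) * n.choose (k+1) := by
          apply mul_le_mul_of_nonneg_right hfac hch1
      _ ≤ (((R:ℝ) - d) / ((R:ℝ) + 1 + d)) * ((∏ t ∈ range d, (((R:ℝ) - t) / ((R:ℝ) + 1 + t))) * n.choose (k+1+d)) := by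
          apply mul_le_mul_of_nonneg_left hIH
          apply div_nonneg _ (by positivity)
          have : (d:ℝ) ≤ R := by exact_mod_cast (by omega : d ≤ R)
          linarith
      _ = (∏ t ∈ range d, (((R:ℝ) - t) / ((R:ℝ) + 1 + t))) * (((R:ℝ) - d) / ((R:ℝ) + 1 + d)) * n.choose (k + (d+1)) := by
          rw [show k + 1 + d = k + (d+1) by ring]; ring

/-- For `ε ∈ (0,1/2)` and `εn ≤ R ≤ n/2`, with `R₀ := ⌊R/2⌋` one has
`|B_n(R₀)|/|B_n(R)| ≤ (R/(2R − R₀))^{R−R₀} ≤ (2/3)^{R−R₀}`. -/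
theorem ball_ratio_bound (ε : ℝ) (hε0 : 0 < ε) (hε1 : ε < 1/2) (n R : ℕ)
    (h1 : ε * n ≤ R) (h2 : 2 * R ≤ n) :
    (∑ k ∈ Finset.range (R / 2 + 1), (n.choose k : ℝ)) /
        (∑ k ∈ Finset.range (R + 1), (n.choose k : ℝ)) ≤
      ((R : ℝ) / (2 * (R : ℝ) - ((R / 2 : ℕ) : ℝ))) ^ (R - R / 2) ∧
    ((R : ℝ) / (2 * (R : ℝ) - ((R / 2 : ℕ) : ℝ))) ^ (R - R / 2) ≤
      ((2 : ℝ) / 3) ^ (R - R / 2) := by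
  set r0 := R / 2 with hr0
  set d := R - R / 2 with hd
  have hr0d : r0 + d = R := by omega
  have hbase : 2 * (R : ℝ) - ((r0 : ℕ) : ℝ) = (R : ℝ) + d := by
    have : (r0 : ℝ) + (d : ℝ) = (R : ℝ) := by exact_mod_cast congrArg (Nat.cast : ℕ → ℝ) hr0d
    linarith
  rcases Nat.eq_zero_or_pos R with hR0 | hRpos
  · subst hR0
    have hd0 : d = 0 := by omega
    have hr00 : r0 = 0 := by omega
    rw [hd0, hr00]
    norm_num
  -- R ≥ 1
  have hq0 : (0:ℝ) < (R : ℝ) + d := by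
    have : (0:ℝ) < (R:ℝ) := by exact_mod_cast hRpos
    positivity
  have hSpos : (0:ℝ) < ∑ k ∈ Finset.range (R + 1), (n.choose k : ℝ) := by
    apply Finset.sum_pos'
    · intro i _; exact Nat.cast_nonneg _
    · exact ⟨0, Finset.mem_range.mpr (Nat.succ_pos R), by norm_num⟩
  constructor
  · rw [hbase, div_le_iff₀ hSpos]
    have main : (∑ k ∈ Finset.range (r0 + 1), (n.choose k : ℝ)) ≤
        ((R:ℝ)/((R:ℝ)+d))^d * ∑ k ∈ Finset.range (R + 1), (n.choose k : ℝ) := by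
      have step1 : (∑ k ∈ Finset.range (r0 + 1), (n.choose k : ℝ)) ≤
          (∏ t ∈ range d, (((R:ℝ) - t) / ((R:ℝ) + 1 + t))) *
            ∑ k ∈ Finset.range (r0 + 1), (n.choose (k + d) : ℝ) := by
        rw [Finset.mul_sum]
        apply Finset.sum_le_sum
        intro k hk
        exact choose_bound n R h2 d k (by have := Finset.mem_range.mp hk; omega)
      have hsum2 : (0:ℝ) ≤ ∑ k ∈ Finset.range (r0 + 1), (n.choose (k + d) : ℝ) := by
        apply Finset.sum_nonneg; intro i _; exact Nat.cast_nonneg _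
      have step2 : (∏ t ∈ range d, (((R:ℝ) - t) / ((R:ℝ) + 1 + t))) *
            (∑ k ∈ Finset.range (r0 + 1), (n.choose (k + d) : ℝ)) ≤
          ((R:ℝ)/((R:ℝ)+d))^d * ∑ k ∈ Finset.range (r0 + 1), (n.choose (k + d) : ℝ) := by
        apply mul_le_mul_of_nonneg_right (prod_bound R d (by omega)) hsum2
      have step3 : (∑ k ∈ Finset.range (r0 + 1), (n.choose (k + d) : ℝ)) ≤
          ∑ k ∈ Finset.range (R + 1), (n.choose k : ℝ) := by
        have hre : (∑ k ∈ Finset.range (r0 + 1), (n.choose (k + d) : ℝ)) =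
            ∑ j ∈ Finset.Ico d (R + 1), (n.choose j : ℝ) := by
          rw [Finset.sum_Ico_eq_sum_range]
          have : R + 1 - d = r0 + 1 := by omega
          rw [this]
          apply Finset.sum_congr rfl
          intro i _
          rw [Nat.add_comm]
        rw [hre]
        apply Finset.sum_le_sum_of_subset_of_nonneg
        · intro j hj
          rw [Finset.mem_Ico] at hj
          exact Finset.mem_range.mpr hj.2
        · intro i _ _; exact Nat.cast_nonneg _
      calc (∑ k ∈ Finset.range (r0 + 1), (n.choose k : ℝ))
          ≤ _ := step1
        _ ≤ ((R:ℝ)/((R:ℝ)+d))^d * ∑ k ∈ Finset.range (r0 + 1), (n.choose (k + d) : ℝ) := step2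
        _ ≤ ((R:ℝ)/((R:ℝ)+d))^d * ∑ k ∈ Finset.range (R + 1), (n.choose k : ℝ) := by
            apply mul_le_mul_of_nonneg_left step3 (by positivity)
    exact main
  · rw [hbase]
    apply pow_le_pow_left₀ (by positivity)
    rw [div_le_div_iff₀ hq0 (by norm_num)]
    have hRd : (R : ℝ) ≤ 2 * d := by
      have : R ≤ 2 * d := by omega
      exact_mod_cast this
    linarith
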